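/- arXiv:1207.2282 — 4 statements merged into one kernel-verified Lean document; each statement's English description precedes it below -/
import Mathlib

section
/- Every subgroup of finite index in ℤ × G, for G a finite group, is generated by {0} × H together with a single element (m, a), where H is a subgroup of G, m is a positive integer, and a is an element of the normalizer of H in G; conversely, each such triple (H, m, a) generates a finite-index subgroup of ℤ × G. -/
/-- The subgroup `Ĥ(H, m, a)` of `ℤ × G` generated by `{0} × H` and `(m, a)`.
Since `ℤ` must be viewed multiplicatively to form the product group, we use
`Multiplicative ℤ × G`; the element `(0, h)` is `(1, h)` multiplicatively. -/
def hatSubgroup (G : Type*) [Group G] (H : Subgroup G) (m : ℤ) (a : G) :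
    Subgroup (Multiplicative ℤ × G) :=
  Subgroup.closure
    ((fun h => ((1 : Multiplicative ℤ), h)) '' (H : Set G) ∪ {(Multiplicative.ofAdd m, a)})

/-- Every finite-index subgroup of `ℤ × G` (`G` a finite group) is of the form
`Ĥ(H, m, a)` for some subgroup `H ≤ G`, positive integer `m`, and `a` in the normalizer
of `H`; conversely each such triple generates a finite-index subgroup. -/
theorem finiteIndex_subgroup_eq_hat {G : Type*} [Group G] [Finite G] :
    (∀ K : Subgroup (Multiplicative ℤ × G), K.index ≠ 0 →
      ∃ (H : Subgroup G) (m : ℤ) (a : G),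
        0 < m ∧ a ∈ Subgroup.normalizer (H : Set G) ∧ K = hatSubgroup G H m a) ∧
    (∀ (H : Subgroup G) (m : ℤ) (a : G), 0 < m → a ∈ Subgroup.normalizer (H : Set G) →
      (hatSubgroup G H m a).index ≠ 0) := by
  constructor
  · intro K hK
    -- the projection of K to ℤ, as an additive subgroup of ℤ
    let P : AddSubgroup ℤ :=
      { carrier := {k : ℤ | ∃ g : G, (Multiplicative.ofAdd k, g) ∈ K}
        zero_mem' := ⟨1, K.one_mem⟩
        add_mem' := by
          rintro x y ⟨g, hg⟩ ⟨g', hg'⟩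
          exact ⟨g * g', K.mul_mem hg hg'⟩
        neg_mem' := by
          rintro x ⟨g, hg⟩
          exact ⟨g⁻¹, K.inv_mem hg⟩ }
    obtain ⟨n, hn⟩ := Int.subgroup_cyclic P
    have hPmem : ∀ k : ℤ, k ∈ P ↔ n ∣ k := by
      intro k
      rw [hn, ← AddSubgroup.zmultiples_eq_closure, Int.mem_zmultiples_iff]
    -- n ≠ 0, else K has infinite index
    have hn0 : n ≠ 0 := by
      rintro rfl
      have hle : K ≤ (⊥ : Subgroup (Multiplicative ℤ)).prod ⊤ := by
        rintro ⟨x, g⟩ hx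
        have : Multiplicative.toAdd x ∈ P := ⟨g, hx⟩
        rw [hPmem, zero_dvd_iff] at this
        refine ⟨?_, trivial⟩
        simpa [Subgroup.mem_bot] using
          (Multiplicative.toAdd.injective (a₂ := (1 : Multiplicative ℤ)) this)
      have hd := Subgroup.index_dvd_of_le hle
      rw [Subgroup.index_prod, Subgroup.index_bot, Subgroup.index_top, mul_one] at hd
      rw [Nat.card_eq_zero_of_infinite, zero_dvd_iff] at hd
      exact hK hd
    set m : ℤ := (n.natAbs : ℤ) with hmdef
    have hm : 0 < m := by
      simpa [hmdef] using Int.natAbs_pos.mpr hn0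
    have hPmem' : ∀ k : ℤ, k ∈ P ↔ m ∣ k := by
      intro k
      rw [hPmem, hmdef, Int.natAbs_dvd]
    -- choose a with (m, a) ∈ K
    obtain ⟨a, hma⟩ : ∃ g : G, (Multiplicative.ofAdd m, g) ∈ K :=
      (hPmem' m).mpr dvd_rfl
    -- H : elements h with (0, h) ∈ K
    set H : Subgroup G := K.comap (MonoidHom.inr (Multiplicative ℤ) G) with hHdef
    have hHmem : ∀ h : G, h ∈ H ↔ ((1 : Multiplicative ℤ), h) ∈ K := fun h => Iff.rfl
    -- conjugation stability
    have key : ∀ p : Multiplicative ℤ × G, p ∈ K → ∀ h : G,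
        ((1 : Multiplicative ℤ), h) ∈ K → ((1 : Multiplicative ℤ), p.2 * h * p.2⁻¹) ∈ K := by
      intro p hp h hh
      have hmul := K.mul_mem (K.mul_mem hp hh) (K.inv_mem hp)
      have he : p * ((1 : Multiplicative ℤ), h) * p⁻¹
          = ((1 : Multiplicative ℤ), p.2 * h * p.2⁻¹) := by
        obtain ⟨x, b⟩ := p
        refine Prod.ext ?_ rfl
        simp [mul_comm]
      rwa [he] at hmul
    have hnorm : a ∈ Subgroup.normalizer (H : Set G) := by
      rw [Subgroup.mem_normalizer_iff]
      intro h
      constructor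
      · intro hh
        exact (hHmem _).mpr (key _ hma h ((hHmem _).mp hh))
      · intro hh
        have h2 := key _ (K.inv_mem hma) _ ((hHmem _).mp hh)
        rw [hHmem]
        simpa [mul_assoc] using h2
    refine ⟨H, m, a, hm, hnorm, le_antisymm ?_ ?_⟩
    · -- K ≤ hat
      rintro ⟨x, g⟩ hp
      have hx : Multiplicative.toAdd x ∈ P := ⟨g, hp⟩
      obtain ⟨k, hk⟩ := (hPmem' _).mp hx
      have hc : (Multiplicative.ofAdd m, a) ∈ hatSubgroup G H m a :=
        Subgroup.subset_closure (Or.inr rfl)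
      have hck : ((Multiplicative.ofAdd m, a)) ^ k ∈ hatSubgroup G H m a :=
        Subgroup.zpow_mem _ hc k
      have hckK : ((Multiplicative.ofAdd m, a)) ^ k ∈ K := Subgroup.zpow_mem _ hma k
      have hq : ((1 : Multiplicative ℤ), g * (a ^ k)⁻¹) ∈ K := by
        have hmul := K.mul_mem hp (K.inv_mem hckK)
        have he : ((x, g) : Multiplicative ℤ × G) * (((Multiplicative.ofAdd m, a)) ^ k)⁻¹
            = ((1 : Multiplicative ℤ), g * (a ^ k)⁻¹) := by
          refine Prod.ext ?_ rfl
          apply Multiplicative.toAdd.injective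
          simp [toAdd_zpow, hk, mul_comm]
        rwa [he] at hmul
      have hsplit : ((x, g) : Multiplicative ℤ × G)
          = ((1 : Multiplicative ℤ), g * (a ^ k)⁻¹) * ((Multiplicative.ofAdd m, a)) ^ k := by
        refine Prod.ext ?_ (by simp)
        apply Multiplicative.toAdd.injective
        simp [toAdd_zpow, hk, mul_comm]
      rw [hsplit]
      exact Subgroup.mul_mem _
        (Subgroup.subset_closure (Or.inl ⟨_, (hHmem _).mpr hq, rfl⟩)) hck
    · -- hat ≤ K
      rw [hatSubgroup]
      rw [Subgroup.closure_le]
      rintro p (⟨h, hh, rfl⟩ | rfl)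
      · exact (hHmem h).mp hh
      · exact hma
  · -- converse
    intro H m a hm ha
    have hn : 0 < orderOf a := orderOf_pos a
    set L : Subgroup (Multiplicative ℤ × G) :=
      (AddSubgroup.toSubgroup (AddSubgroup.zmultiples (m * (orderOf a : ℤ)))).prod
        (⊥ : Subgroup G) with hLdef
    have hc : (Multiplicative.ofAdd m, a) ∈ hatSubgroup G H m a :=
      Subgroup.subset_closure (Or.inr rfl)
    have hle : L ≤ hatSubgroup G H m a := by
      rintro ⟨x, g⟩ ⟨hx, hg⟩
      have hg1 : g = 1 := by simpa using hg
      have hx' : (m * (orderOf a : ℤ)) ∣ Multiplicative.toAdd x :=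
        Int.mem_zmultiples_iff.mp hx
      obtain ⟨j, hj⟩ := hx'
      have he : ((x, g) : Multiplicative ℤ × G)
          = ((Multiplicative.ofAdd m, a)) ^ ((orderOf a : ℤ) * j) := by
        refine Prod.ext ?_ ?_
        · apply Multiplicative.toAdd.injective
          simp [toAdd_zpow, hj]
          ring
        · show g = a ^ ((orderOf a : ℤ) * j)
          rw [hg1, zpow_mul]
          norm_cast
          simp [pow_orderOf_eq_one]
      rw [he]
      exact Subgroup.zpow_mem _ hc _
    have hd := Subgroup.index_dvd_of_le hle
    rw [hLdef, Subgroup.index_prod, AddSubgroup.index_toSubgroup, Int.index_zmultiples,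
      Subgroup.index_bot] at hd
    intro h0
    rw [h0, zero_dvd_iff, Nat.mul_eq_zero] at hd
    rcases hd with hd | hd
    · exact absurd hd (Int.natAbs_ne_zero.mpr (by positivity))
    · exact absurd hd Nat.card_pos.ne'
end

section
/- For a finite group G, two finite-index subgroups Ĥ(H, m, a) and Ĥ(H', m', a') of ℤ × G are conjugate in ℤ × G if and only if m = m' and there exists g ∈ G with H' = g⁻¹Hg and a' ∈ g⁻¹ a g · H'. -/
lemma mem_hatSubgroup_iff {G : Type*} [Group G] {H : Subgroup G} {m : ℤ} {a : G}
    (ha : a ∈ Subgroup.normalizer (H : Set G)) {p : Multiplicative ℤ × G} :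
    p ∈ hatSubgroup G H m a ↔
      ∃ k : ℤ, ∃ h ∈ H, p = (Multiplicative.ofAdd (k * m), a ^ k * h) := by
  have key : ∀ (k : ℤ) (h : G), h ∈ H → (a ^ k)⁻¹ * h * a ^ k ∈ H := by
    intro k h hh
    have := (Subgroup.mem_normalizer_iff.mp ((Subgroup.normalizer (H : Set G)).zpow_mem ha (-k)) h).mp hh
    simpa [zpow_neg, mul_assoc] using this
  let S : Subgroup (Multiplicative ℤ × G) :=
    { carrier := {p | ∃ k : ℤ, ∃ h ∈ H, p = (Multiplicative.ofAdd (k * m), a ^ k * h)}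
      one_mem' := ⟨0, 1, H.one_mem, by ext <;> simp⟩
      mul_mem' := by
        rintro p q ⟨k₁, h₁, hh₁, rfl⟩ ⟨k₂, h₂, hh₂, rfl⟩
        refine ⟨k₁ + k₂, ((a ^ k₂)⁻¹ * h₁ * a ^ k₂) * h₂,
          H.mul_mem (key k₂ h₁ hh₁) hh₂, ?_⟩
        refine Prod.ext ?_ ?_
        · show Multiplicative.ofAdd (k₁ * m) * Multiplicative.ofAdd (k₂ * m) = _
          rw [← ofAdd_add]; ring_nf
        · show (a ^ k₁ * h₁) * (a ^ k₂ * h₂) = a ^ (k₁ + k₂) * _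
          rw [zpow_add]; group
      inv_mem' := by
        rintro p ⟨k, h, hh, rfl⟩
        refine ⟨-k, (a ^ (-k))⁻¹ * h⁻¹ * a ^ (-k), key (-k) h⁻¹ (H.inv_mem hh), ?_⟩
        refine Prod.ext ?_ ?_
        · show (Multiplicative.ofAdd (k * m))⁻¹ = _
          rw [← ofAdd_neg]; ring_nf
        · show (a ^ k * h)⁻¹ = a ^ (-k) * _
          rw [zpow_neg]; group }
  constructor
  · intro hp
    refine (Subgroup.closure_le S).mpr ?_ hp
    rintro q (⟨h, hh, rfl⟩ | rfl)
    · exact ⟨0, h, hh, by simp⟩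
    · exact ⟨1, 1, H.one_mem, by simp⟩
  · rintro ⟨k, h, hh, rfl⟩
    have h1 : ((1 : Multiplicative ℤ), h) ∈ hatSubgroup G H m a :=
      Subgroup.subset_closure (Or.inl ⟨h, hh, rfl⟩)
    have h2 : ((Multiplicative.ofAdd m, a) : Multiplicative ℤ × G) ∈ hatSubgroup G H m a :=
      Subgroup.subset_closure (Or.inr rfl)
    have heq : ((Multiplicative.ofAdd (k * m), a ^ k * h) : Multiplicative ℤ × G)
        = (Multiplicative.ofAdd m, a) ^ k * ((1 : Multiplicative ℤ), h) := by
      refine Prod.ext ?_ ?_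
      · show Multiplicative.ofAdd (k * m) = (Multiplicative.ofAdd m, a).1 ^ k * 1
        rw [mul_one, ← ofAdd_zsmul, smul_eq_mul]
      · show a ^ k * h = (Multiplicative.ofAdd m, a).2 ^ k * h
        rfl
    rw [heq]
    exact Subgroup.mul_mem _ (Subgroup.zpow_mem _ h2 k) h1

lemma map_conj_hatSubgroup {G : Type*} [Group G] (H : Subgroup G) (m : ℤ) (a : G)
    (t : Multiplicative ℤ) (g : G) :
    Subgroup.map (MulAut.conj ((t, g) : Multiplicative ℤ × G)).toMonoidHom
        (hatSubgroup G H m a)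
      = hatSubgroup G (Subgroup.map (MulAut.conj g).toMonoidHom H) m (g * a * g⁻¹) := by
  unfold hatSubgroup
  rw [MonoidHom.map_closure]
  congr 1
  rw [Set.image_union, Set.image_singleton, Subgroup.coe_map, Set.image_image,
    Set.image_image]
  congr 1
  · apply Set.image_congr
    intro h _
    refine Prod.ext ?_ ?_
    · show t * 1 * t⁻¹ = 1
      group
    · rfl
  · congr 1
    refine Prod.ext ?_ ?_
    · show t * Multiplicative.ofAdd m * t⁻¹ = Multiplicative.ofAdd m
      rw [mul_comm t, mul_assoc, mul_inv_cancel, mul_one]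
    · rfl

lemma hat_eq_of_data {G : Type*} [Group G] {H₁ H₂ : Subgroup G} {m₁ m₂ : ℤ} {a₁ a₂ : G}
    (hmm : m₁ = m₂) (hHH : H₁ = H₂) (hab : a₂⁻¹ * a₁ ∈ H₂) :
    hatSubgroup G H₁ m₁ a₁ = hatSubgroup G H₂ m₂ a₂ := by
  subst hmm; subst hHH
  have e1 : ((1 : Multiplicative ℤ), a₂⁻¹ * a₁) ∈ hatSubgroup G H₁ m₁ a₂ :=
    Subgroup.subset_closure (Or.inl ⟨_, hab, rfl⟩)
  have e1' : ((1 : Multiplicative ℤ), a₁⁻¹ * a₂) ∈ hatSubgroup G H₁ m₁ a₁ :=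
    Subgroup.subset_closure (Or.inl ⟨_, by simpa using H₁.inv_mem hab, rfl⟩)
  apply le_antisymm
  · refine (Subgroup.closure_le _).mpr ?_
    rintro q (⟨h, hh, rfl⟩ | rfl)
    · exact Subgroup.subset_closure (Or.inl ⟨h, hh, rfl⟩)
    · have e2 : ((Multiplicative.ofAdd m₁, a₂) : Multiplicative ℤ × G)
          ∈ hatSubgroup G H₁ m₁ a₂ := Subgroup.subset_closure (Or.inr rfl)
      have := Subgroup.mul_mem _ e2 e1
      simpa [mul_assoc] using this
  · refine (Subgroup.closure_le _).mpr ?_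
    rintro q (⟨h, hh, rfl⟩ | rfl)
    · exact Subgroup.subset_closure (Or.inl ⟨h, hh, rfl⟩)
    · have e2 : ((Multiplicative.ofAdd m₁, a₁) : Multiplicative ℤ × G)
          ∈ hatSubgroup G H₁ m₁ a₁ := Subgroup.subset_closure (Or.inr rfl)
      have := Subgroup.mul_mem _ e2 e1'
      simpa [mul_assoc] using this

lemma hat_eq_data {G : Type*} [Group G] {H₁ H₂ : Subgroup G} {m₁ m₂ : ℤ} {a₁ a₂ : G}
    (hm₁ : 0 < m₁) (hm₂ : 0 < m₂) (ha₁ : a₁ ∈ Subgroup.normalizer (H₁ : Set G)) (ha₂ : a₂ ∈ Subgroup.normalizer (H₂ : Set G))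
    (heq : hatSubgroup G H₁ m₁ a₁ = hatSubgroup G H₂ m₂ a₂) :
    m₁ = m₂ ∧ H₁ = H₂ ∧ a₂⁻¹ * a₁ ∈ H₂ := by
  -- H₁ ≤ H₂ and H₂ ≤ H₁
  have hle : ∀ (H₁' H₂' : Subgroup G) (m₁' m₂' : ℤ) (a₁' a₂' : G), 0 < m₂' →
      a₂' ∈ Subgroup.normalizer (H₂' : Set G) →
      hatSubgroup G H₁' m₁' a₁' = hatSubgroup G H₂' m₂' a₂' → H₁' ≤ H₂' := by
    intro H₁' H₂' m₁' m₂' a₁' a₂' hm ha h x hx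
    have : ((1 : Multiplicative ℤ), x) ∈ hatSubgroup G H₂' m₂' a₂' := by
      rw [← h]; exact Subgroup.subset_closure (Or.inl ⟨x, hx, rfl⟩)
    obtain ⟨k, h', hh', hp⟩ := (mem_hatSubgroup_iff ha).mp this
    obtain ⟨hp1, hp2⟩ := Prod.mk.injEq .. ▸ hp
    have hk0 : k = 0 := by
      have : (0 : ℤ) = k * m₂' := congrArg Multiplicative.toAdd hp1
      rcases mul_eq_zero.mp this.symm with h0 | h0
      · exact h0
      · omega
    subst hk0
    simpa [hp2] using hh'
  have hH : H₁ = H₂ := le_antisymm (hle _ _ _ _ _ _ hm₂ ha₂ heq) (hle _ _ _ _ _ _ hm₁ ha₁ heq.symm)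
  -- the (m, a) generator
  have hgen : ∀ (H₁' H₂' : Subgroup G) (m₁' m₂' : ℤ) (a₁' a₂' : G),
      a₂' ∈ Subgroup.normalizer (H₂' : Set G) →
      hatSubgroup G H₁' m₁' a₁' = hatSubgroup G H₂' m₂' a₂' →
      ∃ k : ℤ, ∃ h ∈ H₂', m₁' = k * m₂' ∧ a₁' = a₂' ^ k * h := by
    intro H₁' H₂' m₁' m₂' a₁' a₂' ha h
    have : ((Multiplicative.ofAdd m₁', a₁') : Multiplicative ℤ × G)
        ∈ hatSubgroup G H₂' m₂' a₂' := by
      rw [← h]; exact Subgroup.subset_closure (Or.inr rfl)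
    obtain ⟨k, h', hh', hp⟩ := (mem_hatSubgroup_iff ha).mp this
    obtain ⟨hp1, hp2⟩ := Prod.mk.injEq .. ▸ hp
    exact ⟨k, h', hh', congrArg Multiplicative.toAdd hp1, hp2⟩
  obtain ⟨k, h, hh, hk, hak⟩ := hgen _ _ _ _ _ _ ha₂ heq
  obtain ⟨l, h', hh', hl, hal⟩ := hgen _ _ _ _ _ _ ha₁ heq.symm
  have hkl : k * l = 1 := by
    have : m₁ = k * l * m₁ := by rw [mul_assoc, ← hl]; exact hk
    have hm₁' : m₁ ≠ 0 := hm₁.ne'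
    nlinarith [this]
  have hk1 : k = 1 := by
    rcases Int.mul_eq_one_iff_eq_one_or_neg_one.mp hkl with ⟨h1, _⟩ | ⟨h1, _⟩
    · exact h1
    · subst h1; omega
  subst hk1
  rw [zpow_one] at hak
  exact ⟨by omega, hH, by rw [hak]; simpa using hh⟩

lemma conj_mem_normalizer {G : Type*} [Group G] {H : Subgroup G} {a : G}
    (ha : a ∈ Subgroup.normalizer (H : Set G)) (g : G) :
    g * a * g⁻¹ ∈ Subgroup.normalizer ((Subgroup.map (MulAut.conj g).toMonoidHom H : Subgroup G) : Set G) := by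
  rw [Subgroup.mem_normalizer_iff]
  intro h
  rw [Subgroup.mem_map_equiv, Subgroup.mem_map_equiv]
  have e : (MulAut.conj g).symm (g * a * g⁻¹ * h * (g * a * g⁻¹)⁻¹)
      = a * ((MulAut.conj g).symm h) * a⁻¹ := by
    simp only [MulAut.conj_symm_apply]
    group
  rw [e]
  exact Subgroup.mem_normalizer_iff.mp ha _

/-- Two finite-index subgroups `Ĥ(H, m, a)` and `Ĥ(H', m', a')` of `ℤ × G` are conjugate
in `ℤ × G` iff `m = m'` and there is `g ∈ G` with `H' = g⁻¹Hg` and `a' ∈ g⁻¹ a g · H'`. -/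
theorem hatSubgroup_conj_iff {G : Type*} [Group G] [Finite G]
    (H H' : Subgroup G) (m m' : ℤ) (a a' : G) (hm : 0 < m) (hm' : 0 < m')
    (ha : a ∈ Subgroup.normalizer (H : Set G)) (ha' : a' ∈ Subgroup.normalizer (H' : Set G)) :
    (∃ γ : Multiplicative ℤ × G,
        hatSubgroup G H' m' a' =
          Subgroup.map (MulAut.conj γ).toMonoidHom (hatSubgroup G H m a)) ↔
      m = m' ∧ ∃ g : G,
        H' = Subgroup.map (MulAut.conj g⁻¹).toMonoidHom H ∧ (g⁻¹ * a * g)⁻¹ * a' ∈ H' := by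
  constructor
  · rintro ⟨⟨t, g⟩, hγ⟩
    rw [map_conj_hatSubgroup] at hγ
    obtain ⟨hmm, hH, hmem⟩ := hat_eq_data hm' hm ha' (conj_mem_normalizer ha g) hγ
    refine ⟨hmm.symm, g⁻¹, by simpa [inv_inv] using hH, ?_⟩
    rw [inv_inv, hH]
    exact hmem
  · rintro ⟨rfl, g, hH, hmem⟩
    refine ⟨((1 : Multiplicative ℤ), g⁻¹), ?_⟩
    rw [map_conj_hatSubgroup]
    refine hat_eq_of_data rfl ?_ ?_
    · simpa [inv_inv] using hH
    · rw [inv_inv, ← hH]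
      exact hmem
end

section
/- Let G be a finite group and let σ be a G-equivariant bijection of a finite G-set A such that A is a single (ℤ × G)-orbit. Then all points of A have conjugate G-stabilizers H, the ℤ-orbits of all points have a common cardinality m·|G_x/H_x| for appropriate data, and A is isomorphic as a (ℤ × G)-set to (ℤ × G)/Ĥ(H, m, α) for some subgroup H ≤ G, positive integer m, and α in the normalizer of H. -/
/-- The `G`-stabilizer of a point of a `(ℤ × G)`-set: the subgroup of `g ∈ G` with
`(0, g) • a = a`. -/
def gStabilizer {G : Type*} [Group G] {A : Type*} [MulAction (Multiplicative ℤ × G) A]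
    (a : A) : Subgroup G :=
  (MulAction.stabilizer (Multiplicative ℤ × G) a).comap (MonoidHom.inr (Multiplicative ℤ) G)

open MulAction Multiplicative

/-- Let `G` be a finite group and let `A` be a finite `(ℤ × G)`-set which is a single
`(ℤ × G)`-orbit (equivalently, a finite `G`-set with a `G`-equivariant bijection `σ`,
the action of `(1, e)`, which is `(ℤ × G)`-transitive).  Then all points of `A` have
conjugate `G`-stabilizers, all `ℤ`-orbits have a common cardinality, and `A` is
isomorphic as a `(ℤ × G)`-set to `(ℤ × G)/Ĥ(H, m, α)` for some subgroup `H ≤ G`,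
positive integer `m` and `α` in the normalizer of `H`. -/
theorem transitive_finite_G_permutation_structure {G : Type*} [Group G] [Finite G]
    (A : Type) [MulAction (Multiplicative ℤ × G) A] [Finite A] [Nonempty A]
    (ht : MulAction.IsPretransitive (Multiplicative ℤ × G) A) :
    (∀ a b : A, ∃ g : G,
        gStabilizer b = Subgroup.map (MulAut.conj g).toMonoidHom (gStabilizer a)) ∧
    (∀ a b : A,
        Nat.card {c : A | ∃ k : ℤ, ((Multiplicative.ofAdd k, (1 : G)) : Multiplicative ℤ × G) • a = c} =
        Nat.card {c : A | ∃ k : ℤ, ((Multiplicative.ofAdd k, (1 : G)) : Multiplicative ℤ × G) • b = c}) ∧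
    ∃ (H : Subgroup G) (m : ℕ) (α : G), 0 < m ∧ α ∈ Subgroup.normalizer (H : Set G) ∧
      ∃ e : A ≃ (Multiplicative ℤ × G) ⧸ hatSubgroup G H (m : ℤ) α,
        ∀ (γ : Multiplicative ℤ × G) (a : A), e (γ • a) = γ • e a := by
  classical
  refine ⟨?_, ?_, ?_⟩
  · -- conjugate G-stabilizers
    intro a b
    obtain ⟨γ, hγ⟩ := ht.exists_smul_eq a b
    refine ⟨γ.2, ?_⟩
    ext h
    rw [Subgroup.mem_map_equiv]
    have key : (MulAut.conj γ).symm ((1 : Multiplicative ℤ), h)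
        = ((1 : Multiplicative ℤ), γ.2⁻¹ * h * γ.2) := by
      rw [MulAut.conj_symm_apply]
      refine Prod.ext ?_ ?_ <;> simp
    simp only [gStabilizer, Subgroup.mem_comap, MonoidHom.inr_apply, MulAut.conj_symm_apply]
    rw [← hγ, MulAction.stabilizer_smul_eq_stabilizer_map_conj, Subgroup.mem_map_equiv, key]
  · -- equal ℤ-orbit cardinalities
    intro a b
    obtain ⟨γ, hγ⟩ := ht.exists_smul_eq a b
    subst hγ
    have key : ∀ (k : ℤ), ((ofAdd k, (1:G)) : Multiplicative ℤ × G) * γ = γ * (ofAdd k, 1) := by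
      intro k
      refine Prod.ext (mul_comm _ _) (by simp)
    refine Nat.card_congr ⟨fun c => ⟨γ • c.1, ?_⟩, fun c => ⟨γ⁻¹ • c.1, ?_⟩, ?_, ?_⟩
    · obtain ⟨k, hk⟩ := c.2
      exact ⟨k, by rw [smul_smul, key, ← smul_smul, hk]⟩
    · obtain ⟨k, hk⟩ := c.2
      refine ⟨k, ?_⟩
      rw [← hk, smul_smul, smul_smul, mul_assoc, key, ← mul_assoc, inv_mul_cancel, one_mul]
    · intro c; simp
    · intro c; simp
  · -- structure theorem
    obtain ⟨a₀⟩ := ‹Nonempty A›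
    set S := MulAction.stabilizer (Multiplicative ℤ × G) a₀ with hS
    obtain ⟨n₁, n₂, hne, heq⟩ := Finite.exists_ne_map_eq_of_infinite
      (fun n : ℕ => ((Multiplicative.ofAdd (n:ℤ), (1:G)) : Multiplicative ℤ × G) • a₀)
    wlog hlt : n₁ < n₂ generalizing n₁ n₂
    · exact this n₂ n₁ hne.symm heq.symm (by omega)
    have hex : ∃ n : ℕ, 0 < n ∧ ∃ g : G, ((ofAdd (n:ℤ), g) : Multiplicative ℤ × G) ∈ S := by
      refine ⟨n₂ - n₁, by omega, 1, ?_⟩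
      have h1 : ((ofAdd ((n₂ - n₁ : ℕ) : ℤ), (1:G)) : Multiplicative ℤ × G)
          = ((ofAdd (n₁:ℤ), (1:G)) : Multiplicative ℤ × G)⁻¹ * (ofAdd (n₂:ℤ), 1) := by
        refine Prod.ext ?_ (by simp)
        push_cast [hlt.le]
        simp [sub_eq_neg_add, ← ofAdd_neg, ← ofAdd_add]
      rw [mem_stabilizer_iff, h1, mul_smul, ← heq, inv_smul_smul]
    set m : ℕ := Nat.find hex with hm
    obtain ⟨hmpos, α, hα⟩ := Nat.find_spec hex
    rw [← hm] at hα hmpos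
    set H : Subgroup G := gStabilizer a₀ with hH
    have memH : ∀ g : G, g ∈ H ↔ ((1 : Multiplicative ℤ), g) ∈ S := fun g => Iff.rfl
    have hpow : ∀ (p : Multiplicative ℤ × G) (q : ℤ), (p ^ q).1 = p.1 ^ q := fun p q => rfl
    -- S = hatSubgroup
    have hSeq : hatSubgroup G H (m : ℤ) α = S := by
      apply le_antisymm
      · rw [hatSubgroup, Subgroup.closure_le]
        rintro x (⟨h, hh, rfl⟩ | rfl)
        · exact (memH h).mp hh
        · exact hα
      · rintro ⟨x, g⟩ hx
        have hdvd : (m : ℤ) ∣ x.toAdd := by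
          by_contra hnd
          set r := x.toAdd % (m : ℤ) with hr
          have hr0 : 0 ≤ r := Int.emod_nonneg _ (by exact_mod_cast hmpos.ne')
          have hrm : r < (m : ℤ) := Int.emod_lt_of_pos _ (by exact_mod_cast hmpos)
          have hrne : r ≠ 0 := fun h0 => hnd (Int.dvd_of_emod_eq_zero (by rw [← hr]; exact h0))
          set q := x.toAdd / (m : ℤ) with hq
          have hmem : (⟨x, g⟩ : Multiplicative ℤ × G) * ((ofAdd (m:ℤ), α) : Multiplicative ℤ × G)⁻¹ ^ q ∈ S :=
            S.mul_mem hx (S.zpow_mem (S.inv_mem hα) q)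
          have hfst : ((⟨x, g⟩ : Multiplicative ℤ × G) * ((ofAdd (m:ℤ), α) : Multiplicative ℤ × G)⁻¹ ^ q).1
              = ofAdd r := by
            rw [Prod.fst_mul, hpow, Prod.fst_inv]
            rw [← ofAdd_neg, ← ofAdd_zsmul, ← ofAdd_toAdd x, ← ofAdd_add]
            congr 1
            rw [hr, hq, Int.emod_def, smul_eq_mul]
            ring
          have hP : 0 < r.toNat ∧ ∃ g' : G, ((ofAdd ((r.toNat : ℕ) : ℤ), g') : Multiplicative ℤ × G) ∈ S := by
            refine ⟨by omega, ((⟨x, g⟩ : Multiplicative ℤ × G) * ((ofAdd (m:ℤ), α))⁻¹ ^ q).2, ?_⟩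
            have hdec : ((⟨x, g⟩ : Multiplicative ℤ × G) * ((ofAdd (m:ℤ), α))⁻¹ ^ q)
                = ((ofAdd ((r.toNat : ℕ) : ℤ), ((⟨x, g⟩ : Multiplicative ℤ × G) * ((ofAdd (m:ℤ), α))⁻¹ ^ q).2) : Multiplicative ℤ × G) := by
              refine Prod.ext ?_ rfl
              rw [hfst]
              congr 1
              omega
            rw [← hdec]
            exact hmem
          exact Nat.find_min hex (m := r.toNat) (by omega) hP
        obtain ⟨q, hqe⟩ := hdvd
        have hmem : (⟨x, g⟩ : Multiplicative ℤ × G) * ((ofAdd (m:ℤ), α) : Multiplicative ℤ × G)⁻¹ ^ q ∈ S :=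
          S.mul_mem hx (S.zpow_mem (S.inv_mem hα) q)
        have hfst : ((⟨x, g⟩ : Multiplicative ℤ × G) * ((ofAdd (m:ℤ), α) : Multiplicative ℤ × G)⁻¹ ^ q).1
            = (1 : Multiplicative ℤ) := by
          rw [Prod.fst_mul, hpow, Prod.fst_inv]
          rw [← ofAdd_neg, ← ofAdd_zsmul, ← ofAdd_toAdd x, ← ofAdd_add]
          rw [hqe]
          simp [mul_comm]
        set s := (⟨x, g⟩ : Multiplicative ℤ × G) * ((ofAdd (m:ℤ), α) : Multiplicative ℤ × G)⁻¹ ^ q with hs'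
        have hsdec : s = ((1 : Multiplicative ℤ), s.2) := Prod.ext hfst rfl
        have hs2 : s.2 ∈ H := (memH s.2).mpr (by rw [← hsdec]; exact hmem)
        have hxg : (⟨x, g⟩ : Multiplicative ℤ × G) = ((1 : Multiplicative ℤ), s.2) * ((ofAdd (m:ℤ), α)) ^ q := by
          rw [← hsdec, hs', mul_assoc, inv_zpow, inv_mul_cancel, mul_one]
        have hgen1 : ((1 : Multiplicative ℤ), s.2) ∈ hatSubgroup G H (m:ℤ) α :=
          Subgroup.subset_closure (Set.mem_union_left _ ⟨s.2, hs2, rfl⟩)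
        have hgen2 : ((ofAdd (m:ℤ), α) : Multiplicative ℤ × G) ∈ hatSubgroup G H (m:ℤ) α :=
          Subgroup.subset_closure (Set.mem_union_right _ rfl)
        rw [hxg]
        exact Subgroup.mul_mem _ hgen1 (Subgroup.zpow_mem _ hgen2 q)
    -- α normalizes H
    have hnorm : α ∈ Subgroup.normalizer (H : Set G) := by
      rw [Subgroup.mem_normalizer_iff]
      intro h
      constructor
      · intro hh
        rw [memH]
        have hdec : ((1 : Multiplicative ℤ), α * h * α⁻¹)
            = ((ofAdd (m:ℤ), α) : Multiplicative ℤ × G) * (1, h) * ((ofAdd (m:ℤ), α))⁻¹ := by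
          refine Prod.ext ?_ ?_
          · simp
          · simp
        rw [hdec]
        exact S.mul_mem (S.mul_mem hα ((memH h).mp hh)) (S.inv_mem hα)
      · intro hh
        rw [memH]
        have hdec : ((1 : Multiplicative ℤ), h)
            = ((ofAdd (m:ℤ), α) : Multiplicative ℤ × G)⁻¹ * (1, α * h * α⁻¹) * ((ofAdd (m:ℤ), α)) := by
          refine Prod.ext ?_ ?_
          · simp
          · show h = α⁻¹ * (α * h * α⁻¹) * α
            group
        rw [hdec]
        exact S.mul_mem (S.mul_mem (S.inv_mem hα) ((memH _).mp hh)) hα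
    -- the equivariant bijection
    have hbij : Function.Bijective (ofQuotientStabilizer (Multiplicative ℤ × G) a₀) := by
      refine ⟨injective_ofQuotientStabilizer _ _, fun b => ?_⟩
      obtain ⟨γ, hγ⟩ := ht.exists_smul_eq a₀ b
      exact ⟨QuotientGroup.mk γ, by rw [ofQuotientStabilizer_mk, hγ]⟩
    refine ⟨H, m, α, hmpos, hnorm, ?_⟩
    rw [hSeq]
    refine ⟨(Equiv.ofBijective _ hbij).symm, fun γ a => ?_⟩
    apply (Equiv.ofBijective _ hbij).injective
    rw [Equiv.apply_symm_apply]
    have hq : ∀ q, Equiv.ofBijective _ hbij q = ofQuotientStabilizer (Multiplicative ℤ × G) a₀ q :=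
      fun q => rfl
    rw [hq, ofQuotientStabilizer_smul, ← hq, Equiv.apply_symm_apply]
end

section
/- Let σ be a G-equivariant bijection of a finite G-set X such that all stabilizers of points are conjugate to a fixed subgroup H ≤ G, for 1 ≤ k < m₀ no G-orbit is mapped to itself by σ^k (i.e. g∘σ^k has no fixed points for all g ∈ G), and g₀∘σ^{m₀} = id for some g₀ ∈ G. Then g₀ normalizes H (centralizes it up to the orbit data), and X is isomorphic as a (ℤ × G)-set to a disjoint union of |X/G|/m₀ copies of (ℤ × G)/Ĥ(H, m₀, g₀); in particular m₀ divides the number of G-orbits of X. -/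
section aux
variable {G X : Type*} [Group G] [MulAction G X]

lemma sigma_zpow_smul (σ : Equiv.Perm X) (hσ : ∀ (g : G) (x : X), σ (g • x) = g • σ x)
    (n : ℤ) (g : G) (x : X) : (σ ^ n) (g • x) = g • (σ ^ n) x := by
  have hc : Commute σ (MulAction.toPerm g : Equiv.Perm X) :=
    Equiv.ext fun y => by simp [Equiv.Perm.mul_apply, hσ]
  have := congrFun (congrArg (fun e : Equiv.Perm X => (e : X → X)) (hc.zpow_left n).eq) x
  simpa [Equiv.Perm.mul_apply] using this

/-- The `(ℤ × G)`-action on `X` induced by `σ`. -/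
def zgAction (σ : Equiv.Perm X) (hσ : ∀ (g : G) (x : X), σ (g • x) = g • σ x) :
    MulAction (Multiplicative ℤ × G) X where
  smul k x := k.2 • (σ ^ (Multiplicative.toAdd k.1)) x
  one_smul x := by
    show (1 : G) • (σ ^ (Multiplicative.toAdd (1 : Multiplicative ℤ))) x = x
    simp
  mul_smul k l x := by
    show (k.2 * l.2) • (σ ^ (Multiplicative.toAdd (k.1 * l.1))) x
        = k.2 • (σ ^ Multiplicative.toAdd k.1) (l.2 • (σ ^ Multiplicative.toAdd l.1) x)
    rw [sigma_zpow_smul σ hσ, mul_smul]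
    congr 1
    have h : Multiplicative.toAdd (k.1 * l.1)
        = Multiplicative.toAdd k.1 + Multiplicative.toAdd l.1 := rfl
    rw [h, zpow_add, Equiv.Perm.mul_apply]

end aux

/-- Let `σ` be a `G`-equivariant bijection of a nonempty finite `G`-set `X` such that
all point stabilizers are conjugate to a fixed subgroup `H ≤ G`, for `1 ≤ k < m₀` no
`G`-orbit is mapped to itself by `σ^k` (i.e. `g∘σ^k` has no fixed points for all
`g ∈ G`), and `g₀∘σ^{m₀} = id` for some `g₀ ∈ G`.  Then `g₀` normalizes `H`, `m₀`
divides the number `N` of `G`-orbits of `X`, and `X` is isomorphic as a `(ℤ × G)`-set to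
the disjoint union of `N/m₀` copies of `(ℤ × G)/Ĥ(H, m₀, g₀)`. -/
theorem elementary_G_permutation_structure {G X : Type*} [Group G] [Finite G]
    [Fintype X] [Nonempty X] [MulAction G X]
    (σ : Equiv.Perm X) (hσ : ∀ (g : G) (x : X), σ (g • x) = g • σ x)
    (H : Subgroup G)
    (hstab : ∀ x : X, ∃ g : G,
      MulAction.stabilizer G x = Subgroup.map (MulAut.conj g).toMonoidHom H)
    (m₀ : ℕ) (hm₀ : 0 < m₀)
    (hfree : ∀ k : ℕ, 1 ≤ k → k < m₀ → ∀ (g : G) (x : X), g • (σ ^ k) x ≠ x)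
    (g₀ : G) (hg₀ : ∀ x : X, g₀ • (σ ^ m₀) x = x) :
    g₀ ∈ Subgroup.normalizer (H : Set G) ∧
    m₀ ∣ Nat.card (Quotient (MulAction.orbitRel G X)) ∧
    ∃ e : X ≃ Fin (Nat.card (Quotient (MulAction.orbitRel G X)) / m₀) ×
        ((Multiplicative ℤ × G) ⧸ hatSubgroup G H (m₀ : ℤ) g₀),
      (∀ (g : G) (x : X),
        e (g • x) = ((e x).1, ((Multiplicative.ofAdd (0 : ℤ), g) : Multiplicative ℤ × G) • (e x).2)) ∧
      (∀ x : X,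
        e (σ x) = ((e x).1, ((Multiplicative.ofAdd (1 : ℤ), (1 : G)) : Multiplicative ℤ × G) • (e x).2)) := by
  classical
  letI : MulAction (Multiplicative ℤ × G) X := zgAction σ hσ
  have hks : ∀ (k : Multiplicative ℤ × G) (x : X),
      k • x = k.2 • (σ ^ (Multiplicative.toAdd k.1)) x := fun _ _ => rfl
  -- σ^m₀ as the action of g₀⁻¹
  have hperm : (σ : Equiv.Perm X) ^ (m₀ : ℤ) = MulAction.toPerm (g₀⁻¹ : G) := by
    rw [zpow_natCast]
    ext x
    have h1 : g₀ • (σ ^ m₀) x = g₀ • (g₀⁻¹ • x) := by rw [hg₀ x, smul_inv_smul]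
    simpa using smul_left_cancel g₀ h1
  have hm_smul : ∀ (q : ℤ) (x : X), (σ ^ ((m₀ : ℤ) * q)) x = g₀⁻¹ ^ q • x := by
    intro q x
    rw [zpow_mul, hperm]
    have h2 : MulAction.toPermHom G X (g₀⁻¹ ^ q) = (MulAction.toPermHom G X g₀⁻¹) ^ q :=
      map_zpow _ _ _
    simp only [MulAction.toPermHom_apply] at h2
    rw [← h2]
    simp
  -- divisibility of exponents of σ fixing points up to G
  have hdiv : ∀ (n : ℤ) (g : G) (x : X), g • (σ ^ n) x = x →
      ∃ q : ℤ, n = (m₀ : ℤ) * q ∧ (g * g₀⁻¹ ^ q) • x = x := by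
    intro n g x hx
    set q := n / (m₀ : ℤ) with hq
    set r := n % (m₀ : ℤ) with hrr
    have hn : n = (m₀ : ℤ) * q + r := (Int.mul_ediv_add_emod n m₀).symm
    have hr0 : 0 ≤ r := Int.emod_nonneg n (by exact_mod_cast hm₀.ne')
    have hrm : r < (m₀ : ℤ) := Int.emod_lt_of_pos n (by exact_mod_cast hm₀)
    have hsp : (σ ^ n) x = g₀⁻¹ ^ q • (σ ^ r) x := by
      have he : n = r + (m₀ : ℤ) * q := by rw [hn]; ring
      rw [he, zpow_add, Equiv.Perm.mul_apply, hm_smul q x, sigma_zpow_smul σ hσ]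
    have hx' : (g * g₀⁻¹ ^ q) • (σ ^ r) x = x := by
      rw [mul_smul]; rw [hsp] at hx; exact hx
    have hr' : r = 0 := by
      by_contra h0
      refine hfree r.toNat (by omega) (by omega) (g * g₀⁻¹ ^ q) x ?_
      rw [← hx']
      congr 2
      rw [← zpow_natCast σ r.toNat]
      congr 1
      omega
    refine ⟨q, by omega, ?_⟩
    rw [hr'] at hx'
    simpa using hx'
  -- points with stabilizer exactly H
  have key : ∀ (x : X) (g : G),
      MulAction.stabilizer G x = Subgroup.map (MulAut.conj g).toMonoidHom H →
      MulAction.stabilizer G (g⁻¹ • x) = H := by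
    intro x g hx
    rw [MulAction.stabilizer_smul_eq_stabilizer_map_conj, hx]
    ext h
    simp only [Subgroup.mem_map, MulEquiv.coe_toMonoidHom, MulAut.conj_apply]
    constructor
    · rintro ⟨a, ⟨b, hb, rfl⟩, ha⟩
      have : b = h := by
        have := ha
        group at this
        simpa using this
      rwa [← this]
    · intro hh
      exact ⟨g * h * g⁻¹, ⟨h, hh, rfl⟩, by group⟩
  -- g₀ normalizes H
  obtain ⟨x₀⟩ := ‹Nonempty X›
  obtain ⟨gc, hgc⟩ := hstab x₀
  have hy : MulAction.stabilizer G (gc⁻¹ • x₀) = H := key x₀ gc hgc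
  set y₀ := gc⁻¹ • x₀ with hy₀
  have hσm_smul : ∀ (g : G) (z : X), (σ ^ m₀) (g • z) = g • (σ ^ m₀) z := by
    intro g z
    have := sigma_zpow_smul σ hσ (m₀ : ℤ) g z
    rwa [zpow_natCast] at this
  have hnorm : g₀ ∈ Subgroup.normalizer (H : Set G) := by
    rw [Subgroup.mem_normalizer_iff]
    intro h
    rw [← hy, MulAction.mem_stabilizer_iff, MulAction.mem_stabilizer_iff]
    have hsm : (σ ^ m₀) y₀ = g₀⁻¹ • y₀ := by
      have h1 : g₀ • (σ ^ m₀) y₀ = g₀ • (g₀⁻¹ • y₀) := by rw [hg₀ y₀, smul_inv_smul]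
      exact smul_left_cancel g₀ h1
    constructor
    · intro hh
      have : h • ((σ ^ m₀) y₀) = (σ ^ m₀) y₀ := by
        rw [← hσm_smul, hh]
      rw [hsm] at this
      calc (g₀ * h * g₀⁻¹) • y₀ = g₀ • h • g₀⁻¹ • y₀ := by rw [mul_smul, mul_smul]
        _ = g₀ • (g₀⁻¹ • y₀) := by rw [this]
        _ = y₀ := smul_inv_smul _ _
    · intro hh
      have h1 : h • (g₀⁻¹ • y₀) = g₀⁻¹ • y₀ := by
        have := congrArg (fun z => g₀⁻¹ • z) hh
        simpa [mul_smul] using this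
      rw [← hsm] at h1
      have h2 : (σ ^ m₀) (h • y₀) = (σ ^ m₀) y₀ := by rw [hσm_smul, h1]
      exact (σ ^ m₀).injective h2
  -- hat subgroup membership facts
  have memH : ∀ h ∈ H, (((1 : Multiplicative ℤ), h) : Multiplicative ℤ × G)
      ∈ hatSubgroup G H (m₀ : ℤ) g₀ :=
    fun h hh => Subgroup.subset_closure (Or.inl ⟨h, hh, rfl⟩)
  have memA : ((Multiplicative.ofAdd (m₀ : ℤ), g₀) : Multiplicative ℤ × G)
      ∈ hatSubgroup G H (m₀ : ℤ) g₀ :=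
    Subgroup.subset_closure (Or.inr rfl)
  -- stabilizer of a point with G-stabilizer H
  have stab_eq : ∀ x : X, MulAction.stabilizer G x = H →
      MulAction.stabilizer (Multiplicative ℤ × G) x = hatSubgroup G H (m₀ : ℤ) g₀ := by
    intro x hx
    apply le_antisymm
    · intro k hk
      rw [MulAction.mem_stabilizer_iff, hks] at hk
      obtain ⟨q, hq1, hq2⟩ := hdiv (Multiplicative.toAdd k.1) k.2 x hk
      have hk2 : k.2 * g₀⁻¹ ^ q ∈ H := by rw [← hx]; exact hq2
      have hkeq : k = (((1 : Multiplicative ℤ), k.2 * g₀⁻¹ ^ q) : Multiplicative ℤ × G)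
          * ((Multiplicative.ofAdd (m₀ : ℤ), g₀)) ^ q := by
        have h1 : k.1 = 1 * (Multiplicative.ofAdd (m₀ : ℤ)) ^ q := by
          apply Multiplicative.toAdd.injective
          rw [toAdd_mul, toAdd_zpow, toAdd_one, toAdd_ofAdd, hq1, smul_eq_mul,
            zero_add, mul_comm]
        apply Prod.ext
        · exact h1
        · show k.2 = (k.2 * g₀⁻¹ ^ q) * g₀ ^ q
          group
      rw [hkeq]
      exact mul_mem (memH _ hk2) (zpow_mem memA q)
    · rw [hatSubgroup, Subgroup.closure_le]
      rintro k hk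
      rcases hk with ⟨h, hh, rfl⟩ | rfl
      · show (((1 : Multiplicative ℤ), h) : Multiplicative ℤ × G) • x = x
        rw [hks]
        simp only [toAdd_one, zpow_zero, Equiv.Perm.coe_one, id_eq]
        rw [← hx] at hh
        exact hh
      · show ((Multiplicative.ofAdd (m₀ : ℤ), g₀) : Multiplicative ℤ × G) • x = x
        rw [hks]
        simp only [toAdd_ofAdd, zpow_natCast]
        exact hg₀ x
  -- the (ℤ×G)-orbit space
  set Q := Quotient (MulAction.orbitRel (Multiplicative ℤ × G) X) with hQdef
  have hrep : ∀ ω : Q, ∃ y : X,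
      Quotient.mk (MulAction.orbitRel (Multiplicative ℤ × G) X) y = ω ∧
      MulAction.stabilizer G y = H := by
    intro ω
    obtain ⟨x, hx⟩ := Quotient.exists_rep ω
    obtain ⟨g, hg⟩ := hstab x
    refine ⟨g⁻¹ • x, ?_, key x g hg⟩
    rw [← hx]
    apply Quotient.sound
    exact MulAction.mem_orbit_iff.mpr
      ⟨((Multiplicative.ofAdd (0 : ℤ), g⁻¹)), by rw [hks]; simp⟩
  choose rep hrepQ hrepH using hrep
  have hstabK : ∀ ω : Q, MulAction.stabilizer (Multiplicative ℤ × G) (rep ω)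
      = hatSubgroup G H (m₀ : ℤ) g₀ := fun ω => stab_eq _ (hrepH ω)
  -- the global parametrization map
  set Φ : Q × ((Multiplicative ℤ × G) ⧸ hatSubgroup G H (m₀ : ℤ) g₀) → X :=
    fun p => Quotient.liftOn' p.2 (fun k => k • rep p.1) (by
      intro a b hab
      have hab' : a⁻¹ * b ∈ hatSubgroup G H (m₀ : ℤ) g₀ :=
        QuotientGroup.leftRel_apply.mp hab
      rw [← hstabK p.1] at hab'
      have h1 : (a⁻¹ * b) • rep p.1 = rep p.1 := hab'
      calc a • rep p.1 = a • ((a⁻¹ * b) • rep p.1) := by rw [h1]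
        _ = b • rep p.1 := by rw [smul_smul, mul_inv_cancel_left]) with hΦdef
  have hΦorbit : ∀ (ω : Q) (k : Multiplicative ℤ × G),
      Quotient.mk (MulAction.orbitRel (Multiplicative ℤ × G) X) (k • rep ω) = ω := by
    intro ω k
    refine Eq.trans ?_ (hrepQ ω)
    exact Quotient.sound (MulAction.mem_orbit _ k)
  have hΦbij : Function.Bijective Φ := by
    constructor
    · rintro ⟨ω, q⟩ ⟨ω', q'⟩ hpq
      obtain ⟨k, rfl⟩ := Quotient.exists_rep q
      obtain ⟨k', rfl⟩ := Quotient.exists_rep q'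
      have h1 : k • rep ω = k' • rep ω' := hpq
      have hωω : ω = ω' := by rw [← hΦorbit ω k, ← hΦorbit ω' k', h1]
      subst hωω
      refine Prod.ext rfl ?_
      apply Quotient.sound'
      refine QuotientGroup.leftRel_apply.mpr ?_
      rw [← hstabK ω]
      show (k⁻¹ * k') • rep ω = rep ω
      rw [mul_smul, ← h1, inv_smul_smul]
    · intro x
      have h0 := hrepQ (Quotient.mk (MulAction.orbitRel (Multiplicative ℤ × G) X) x)
      obtain ⟨k, hk⟩ := MulAction.mem_orbit_iff.mp (Quotient.exact h0)
      refine ⟨(Quotient.mk (MulAction.orbitRel (Multiplicative ℤ × G) X) x,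
        Quotient.mk'' k⁻¹), ?_⟩
      show k⁻¹ • rep _ = x
      rw [← hk, inv_smul_smul]
  -- the comparison of orbit counts
  set π : Quotient (MulAction.orbitRel G X) → Q :=
    Quotient.map' id (fun a b hab => by
      obtain ⟨g, hg⟩ := MulAction.mem_orbit_iff.mp hab
      exact MulAction.mem_orbit_iff.mpr
        ⟨((Multiplicative.ofAdd (0 : ℤ), g)), by rw [hks]; simpa using hg⟩) with hπdef
  have hσj_orbit : ∀ (ω : Q) (j : ℕ),
      π (Quotient.mk (MulAction.orbitRel G X) ((σ ^ j) (rep ω))) = ω := by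
    intro ω j
    show Quotient.mk (MulAction.orbitRel (Multiplicative ℤ × G) X) ((σ ^ j) (rep ω)) = ω
    refine Eq.trans ?_ (hrepQ ω)
    apply Quotient.sound
    exact MulAction.mem_orbit_iff.mpr
      ⟨((Multiplicative.ofAdd (j : ℤ), 1)), by rw [hks]; simp [zpow_natCast]⟩
  have hinj : ∀ (y : X) (i j : ℕ), i < m₀ → j < m₀ →
      (∃ g : G, g • (σ ^ j) y = (σ ^ i) y) → i = j := by
    intro y i j hi hj hex
    obtain ⟨g, hg⟩ := hex
    by_contra hne
    rcases Nat.lt_or_ge i j with h | h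
    · refine hfree (j - i) (by omega) (by omega) g ((σ ^ i) y) ?_
      have h2 : (σ ^ (j - i)) ((σ ^ i) y) = (σ ^ j) y := by
        rw [← Equiv.Perm.mul_apply, ← pow_add, Nat.sub_add_cancel h.le]
      rw [h2, hg]
    · have h' : j < i := by omega
      refine hfree (i - j) (by omega) (by omega) g⁻¹ ((σ ^ j) y) ?_
      have h2 : (σ ^ (i - j)) ((σ ^ j) y) = (σ ^ i) y := by
        rw [← Equiv.Perm.mul_apply, ← pow_add, Nat.sub_add_cancel h'.le]
      rw [h2, ← hg, inv_smul_smul]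
  have hfib : ∀ ω : Q, Function.Bijective (fun j : Fin m₀ =>
      (⟨Quotient.mk (MulAction.orbitRel G X) ((σ ^ (j : ℕ)) (rep ω)), hσj_orbit ω j⟩ :
        {c : Quotient (MulAction.orbitRel G X) // π c = ω})) := by
    intro ω
    constructor
    · intro i j hij
      have h1 : Quotient.mk (MulAction.orbitRel G X) ((σ ^ (i : ℕ)) (rep ω))
          = Quotient.mk (MulAction.orbitRel G X) ((σ ^ (j : ℕ)) (rep ω)) :=
        congrArg Subtype.val hij
      exact Fin.ext (hinj (rep ω) i j i.isLt j.isLt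
        (MulAction.mem_orbit_iff.mp (Quotient.exact h1)))
    · rintro ⟨c, hc⟩
      obtain ⟨y, rfl⟩ := Quotient.exists_rep c
      have hy' : Quotient.mk (MulAction.orbitRel (Multiplicative ℤ × G) X) y = ω := hc
      rw [← hrepQ ω] at hy'
      obtain ⟨k, hk⟩ := MulAction.mem_orbit_iff.mp (Quotient.exact hy')
      obtain ⟨j, hjm, qq, hn⟩ : ∃ j : ℕ, j < m₀ ∧ ∃ qq : ℤ,
          Multiplicative.toAdd k.1 = (j : ℤ) + (m₀ : ℤ) * qq := by
        have h1 := Int.mul_ediv_add_emod (Multiplicative.toAdd k.1) (m₀ : ℤ)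
        have h2 := Int.emod_nonneg (Multiplicative.toAdd k.1)
          (show ((m₀ : ℤ)) ≠ 0 by exact_mod_cast hm₀.ne')
        have h3 := Int.emod_lt_of_pos (Multiplicative.toAdd k.1)
          (show (0 : ℤ) < (m₀ : ℤ) by exact_mod_cast hm₀)
        refine ⟨(Multiplicative.toAdd k.1 % (m₀ : ℤ)).toNat, by omega,
          Multiplicative.toAdd k.1 / (m₀ : ℤ), by omega⟩
      refine ⟨⟨j, hjm⟩, ?_⟩
      apply Subtype.ext
      show Quotient.mk (MulAction.orbitRel G X) ((σ ^ j) (rep ω))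
        = Quotient.mk (MulAction.orbitRel G X) y
      apply Quotient.sound
      have hy2 : y = (k.2 * g₀⁻¹ ^ qq) • (σ ^ j) (rep ω) := by
        rw [← hk, hks]
        have h3 : (σ ^ (Multiplicative.toAdd k.1)) (rep ω)
            = g₀⁻¹ ^ qq • (σ ^ j) (rep ω) := by
          rw [hn, zpow_add, Equiv.Perm.mul_apply, hm_smul, sigma_zpow_smul σ hσ,
            zpow_natCast]
        rw [h3, mul_smul]
      exact MulAction.mem_orbit_iff.mpr
        ⟨(k.2 * g₀⁻¹ ^ qq)⁻¹, by rw [hy2, inv_smul_smul]⟩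
  have eTot : Quotient (MulAction.orbitRel G X) ≃ Q × Fin m₀ :=
    (Equiv.sigmaFiberEquiv π).symm.trans
      ((Equiv.sigmaCongrRight fun ω => (Equiv.ofBijective _ (hfib ω)).symm).trans
        (Equiv.sigmaEquivProd Q (Fin m₀)))
  have hcard : Nat.card (Quotient (MulAction.orbitRel G X)) = Nat.card Q * m₀ := by
    rw [Nat.card_congr eTot, Nat.card_prod]
    simp
  have hdvd : m₀ ∣ Nat.card (Quotient (MulAction.orbitRel G X)) :=
    ⟨Nat.card Q, by rw [hcard, mul_comm]⟩
  have hNdiv : Nat.card (Quotient (MulAction.orbitRel G X)) / m₀ = Nat.card Q := by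
    rw [hcard]
    exact Nat.mul_div_cancel _ hm₀
  have eQ : Fin (Nat.card (Quotient (MulAction.orbitRel G X)) / m₀) ≃ Q :=
    (finCongr hNdiv).trans (Finite.equivFin Q).symm
  set E1 : (Q × ((Multiplicative ℤ × G) ⧸ hatSubgroup G H (m₀ : ℤ) g₀)) ≃ X :=
    Equiv.ofBijective Φ hΦbij with hE1
  have hEquiv : ∀ (k : Multiplicative ℤ × G) (x : X),
      E1.symm (k • x) = ((E1.symm x).1, k • (E1.symm x).2) := by
    intro k x
    rw [Equiv.symm_apply_eq]
    obtain ⟨a, ha⟩ := QuotientGroup.mk_surjective ((E1.symm x).2)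
    have hx : Φ (E1.symm x) = x := E1.apply_symm_apply x
    have hpair : (((E1.symm x).1, (QuotientGroup.mk a :
        (Multiplicative ℤ × G) ⧸ hatSubgroup G H (m₀ : ℤ) g₀))) = E1.symm x :=
      Prod.ext rfl ha
    have hx2 : Φ ((E1.symm x).1, QuotientGroup.mk a) = x := by rw [hpair]; exact hx
    have hx3 : a • rep (E1.symm x).1 = x := hx2
    show k • x = Φ ((E1.symm x).1, k • (E1.symm x).2)
    rw [← ha]
    have h2 : (k • (QuotientGroup.mk a :
        (Multiplicative ℤ × G) ⧸ hatSubgroup G H (m₀ : ℤ) g₀))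
        = QuotientGroup.mk (k * a) := rfl
    rw [h2]
    conv_lhs => rw [← hx3]
    show k • (a • rep _) = (k * a) • rep _
    exact (mul_smul k a _).symm
  refine ⟨hnorm, hdvd,
    E1.symm.trans (Equiv.prodCongr eQ.symm (Equiv.refl _)), ?_, ?_⟩
  · intro g x
    have hk : ((Multiplicative.ofAdd (0 : ℤ), g) : Multiplicative ℤ × G) • x = g • x := by
      rw [hks]; simp
    show (Equiv.prodCongr eQ.symm (Equiv.refl _)) (E1.symm (g • x)) = _
    rw [← hk, hEquiv]
    rfl
  · intro x
    have hk : ((Multiplicative.ofAdd (1 : ℤ), (1 : G)) : Multiplicative ℤ × G) • x = σ x := by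
      rw [hks]; simp
    show (Equiv.prodCongr eQ.symm (Equiv.refl _)) (E1.symm (σ x)) = _
    rw [← hk, hEquiv]
    rfl
end
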